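/- Let l ≥ 1 and let e_{−1}, e_0, …, e_{l−1} ∈ Σ_p(D) (not necessarily distinct) with e_{−1} = e_{l−1} and V(e_i, e_{i−1}) ≠ ∅ for all 0 ≤ i ≤ l−1. For each 0 ≤ i ≤ l−1 choose V_i = (v_{i,d})_{d∈D} ∈ V(e_i, e_{i−1}). Then U = (u_d) defined by u_d := Σ_{i=0}^{l−1} p^i·v_{i,d} is a minimal element of E_{D,p}(l), and its support satisfies φ_U(i) = e_{l−1−i} for every 0 ≤ i ≤ l−1. -/

import Mathlib

open scoped BigOperators
open scoped Classical

/-- `sp p u` is the sum of the base-`p` digits of `u`. -/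
def sp (p u : ℕ) : ℕ := (Nat.digits p u).sum

variable {ι : Type} [Fintype ι]

/-- The coordinatewise sum `Σ_{d ∈ D} u_d · d`. -/
def sigmaSum (D : Finset (ι → ℕ)) (U : D → ℕ) (k : ι) : ℕ :=
  ∑ d, U d * (d : ι → ℕ) k

/-- Membership in the set `E_{D,p}(r)`. -/
def memE (p : ℕ) (D : Finset (ι → ℕ)) (r : ℕ) (U : D → ℕ) : Prop :=
  (∀ d, U d ≤ p ^ r - 1) ∧
  (∀ k, (p ^ r - 1) ∣ sigmaSum D U k ∧ 0 < sigmaSum D U k)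

/-- The `p`-weight `s_p(U)` of a tuple `U`. -/
def spU (p : ℕ) (D : Finset (ι → ℕ)) (U : D → ℕ) : ℕ := ∑ d, sp p (U d)

/-- `s_{D,p}(r)`, the minimal `p`-weight of an element of `E_{D,p}(r)`. -/
noncomputable def sDp (p : ℕ) (D : Finset (ι → ℕ)) (r : ℕ) : ℕ :=
  sInf { s | ∃ U : D → ℕ, memE p D r U ∧ spU p D U = s }

/-- The `p`-density `δ_p(D)` of the set `D`. -/
noncomputable def density (p : ℕ) (D : Finset (ι → ℕ)) : ℝ :=
  (1 / ((p : ℝ) - 1)) * sInf { x : ℝ | ∃ r : ℕ, 1 ≤ r ∧ x = (sDp p D r : ℝ) / (r : ℝ) }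

/-- A minimal solution in `E_{D,p}(r)`. -/
def minimalSol (p : ℕ) (D : Finset (ι → ℕ)) (r : ℕ) (U : D → ℕ) : Prop :=
  memE p D r U ∧ (spU p D U : ℝ) = ((p : ℝ) - 1) * (r : ℝ) * density p D

/-- `φ_r(U) = (1/(p^r − 1)) Σ_{d ∈ D} u_d · d`. -/
def phiMap (p : ℕ) (D : Finset (ι → ℕ)) (r : ℕ) (U : D → ℕ) (k : ι) : ℕ :=
  sigmaSum D U k / (p ^ r - 1)

/-- The shift `δ_r` on `{0, …, p^r − 1}`. -/
def shiftFun (p r u : ℕ) : ℕ := if u = p ^ r - 1 then u else (p * u) % (p ^ r - 1)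

/-- The componentwise action of the shift `δ_r` on tuples. -/
def shiftE (p : ℕ) (D : Finset (ι → ℕ)) (r : ℕ) (U : D → ℕ) : D → ℕ :=
  fun d => shiftFun p r (U d)

/-- The support `φ_U : ℤ/rℤ → ℕ^n` of a solution `U ∈ E_{D,p}(r)`. -/
def suppMap (p : ℕ) (D : Finset (ι → ℕ)) (r : ℕ) (U : D → ℕ) (k : ZMod r) : ι → ℕ :=
  phiMap p D r ((shiftE p D r)^[k.val] U)

/-- Membership in `MI_{D,p}(r)`: minimal irreducible solutions. -/
def memMI (p : ℕ) (D : Finset (ι → ℕ)) (r : ℕ) (U : D → ℕ) : Prop :=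
  minimalSol p D r U ∧ Function.Injective (suppMap p D r U)

/-- The `p`-minimal support `Σ_p(D)`. -/
def minSupport (p : ℕ) (D : Finset (ι → ℕ)) : Set (ι → ℕ) :=
  { e | ∃ r : ℕ, 1 ≤ r ∧ ∃ U : D → ℕ, memMI p D r U ∧ e ∈ Set.range (suppMap p D r U) }

/-- `ψ(U)`: the tuple of last base-`p` digits of `U`. -/
def psiMap (p : ℕ) (D : Finset (ι → ℕ)) (U : D → ℕ) : D → ℕ := fun d => U d % p

/-- The set `V(e, e')` of digit tuples of minimal irreducible solutions with
`φ_U(−1) = e` and `φ_U(0) = e'`. -/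
def Vset (p : ℕ) (D : Finset (ι → ℕ)) (e e' : ι → ℕ) : Set (D → ℕ) :=
  { v | ∃ r : ℕ, 1 ≤ r ∧ ∃ U : D → ℕ, memMI p D r U ∧
      suppMap p D r U (-1) = e ∧ suppMap p D r U 0 = e' ∧ psiMap p D U = v }

/-- The weight `w(V) = Σ_{d ∈ D} v_d`. -/
def weightV (D : Finset (ι → ℕ)) (v : D → ℕ) : ℕ := ∑ d, v d


namespace DigitsGlueAux

/-! ### Arithmetic lemmas about `shiftFun` and digit sums -/

lemma pow_pred {p r : ℕ} (hp : 2 ≤ p) (hr : 1 ≤ r) : p ^ r = p ^ (r - 1) * p := by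
  conv_lhs => rw [show r = (r - 1) + 1 by omega]
  rw [pow_succ]

lemma shift_eq {p r u : ℕ} (hp : 2 ≤ p) (hr : 1 ≤ r) (hu : u ≤ p ^ r - 1) :
    shiftFun p r u = (u % p ^ (r - 1)) * p + u / p ^ (r - 1) := by
  have hq : 0 < p ^ (r - 1) := pow_pos (by omega) _
  have hpr : p ^ r = p ^ (r - 1) * p := pow_pred hp hr
  set q := p ^ (r - 1) with hqdef
  have hqp : 2 ≤ q * p := by
    calc 2 = 1 * 2 := by norm_num
      _ ≤ q * p := Nat.mul_le_mul hq hp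
  by_cases h : u = p ^ r - 1
  · rw [shiftFun, if_pos h, h, hpr]
    have key : q * p - 1 = (q - 1) + q * (p - 1) := by
      have e2 : q * (p - 1) + q = q * p := by rw [← Nat.mul_succ]; congr 1; omega
      omega
    have hdiv : (q * p - 1) / q = p - 1 := by
      rw [key, Nat.add_mul_div_left _ _ hq, Nat.div_eq_of_lt (by omega)]
      omega
    have hmod : (q * p - 1) % q = q - 1 := by
      rw [key, Nat.add_mul_mod_self_left, Nat.mod_eq_of_lt (by omega)]
    rw [hdiv, hmod]
    have e1 : (q - 1) * p + p = q * p := by rw [← Nat.succ_mul]; congr 1; omega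
    omega
  · have hu' : u < p ^ r - 1 := lt_of_le_of_ne hu h
    rw [shiftFun, if_neg h]
    have hdm : q * (u / q) + u % q = u := Nat.div_add_mod u q
    set a := u / q with ha
    set b := u % q with hb
    have hbq : b < q := Nat.mod_lt _ hq
    have hap : a < p := by
      rw [ha]
      apply Nat.div_lt_of_lt_mul
      calc u < p ^ r := by omega
        _ = q * p := hpr
    have hlt : a + p * b < p ^ r - 1 := by
      rw [hpr]
      have e2 : p * b + p ≤ p * q := by
        calc p * b + p = p * (b + 1) := by ring
          _ ≤ p * q := Nat.mul_le_mul_left p hbq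
      have e3 : p * q = q * p := Nat.mul_comm p q
      by_cases hbe : b = q - 1
      · have haa : a ≤ p - 2 := by
          by_contra hc
          have ha2 : a = p - 1 := by omega
          apply h
          rw [hpr, ← hdm, ha2, hbe]
          have e4 : q * (p - 1) + q = q * p := by rw [← Nat.mul_succ]; congr 1; omega
          omega
        have e5 : p * b + p = p * q := by rw [hbe, ← Nat.mul_succ]; congr 1; omega
        omega
      · have hbb : b ≤ q - 2 := by omega
        have e6 : p * b + 2 * p ≤ p * q := by
          calc p * b + 2 * p = p * (b + 2) := by ring
            _ ≤ p * q := Nat.mul_le_mul_left p (by omega)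
        omega
    have hpu : p * u = (a + p * b) + (p ^ r - 1) * a := by
      have e7 : p * u = p * (q * a) + p * b := by rw [← hdm]; ring
      have e8 : p * (q * a) = q * p * a := by ring
      have e9 : (q * p - 1) * a + a = q * p * a := by rw [← Nat.succ_mul]; congr 1; omega
      rw [hpr]
      omega
    rw [hpu, Nat.add_mul_mod_self_left, Nat.mod_eq_of_lt hlt]
    ring

lemma shift_le {p r u : ℕ} (hp : 2 ≤ p) (hr : 1 ≤ r) (hu : u ≤ p ^ r - 1) :
    shiftFun p r u ≤ p ^ r - 1 := by
  rw [shift_eq hp hr hu]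
  have hq : 0 < p ^ (r - 1) := pow_pos (by omega) _
  have hpr : p ^ r = p ^ (r - 1) * p := pow_pred hp hr
  set q := p ^ (r - 1)
  have h1 : u % q ≤ q - 1 := by
    have := Nat.mod_lt u hq; omega
  have h2 : u / q ≤ p - 1 := by
    have h3 : u / q < p := by
      apply Nat.div_lt_of_lt_mul
      have h0 : 0 < p ^ r := pow_pos (by omega) _
      calc u < p ^ r := by omega
        _ = q * p := hpr
    omega
  calc (u % q) * p + u / q ≤ (q - 1) * p + (p - 1) :=
        Nat.add_le_add (Nat.mul_le_mul_right p h1) h2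
    _ = p ^ r - 1 := by
        rw [hpr]
        have e1 : (q - 1) * p + p = q * p := by rw [← Nat.succ_mul]; congr 1; omega
        omega

lemma shift_zero {p r u : ℕ} (hp : 2 ≤ p) (hr : 1 ≤ r) (hu : u ≤ p ^ r - 1)
    (h0 : shiftFun p r u = 0) : u = 0 := by
  rw [shift_eq hp hr hu] at h0
  rw [Nat.add_eq_zero] at h0
  have h1 : u / p ^ (r - 1) = 0 := h0.2
  have h2 : u % p ^ (r - 1) = 0 := by
    rcases Nat.mul_eq_zero.mp h0.1 with h | h
    · exact h
    · omega
  have h3 := Nat.div_add_mod u (p ^ (r - 1))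
  rw [h1, h2] at h3
  simpa using h3.symm

lemma shift_identity {p r u : ℕ} (hp : 2 ≤ p) (hr : 1 ≤ r) (hu : u ≤ p ^ r - 1) :
    p * u = shiftFun p r u + (p ^ r - 1) * (shiftFun p r u % p) := by
  have hq : 0 < p ^ (r - 1) := pow_pos (by omega) _
  have hpr : p ^ r = p ^ (r - 1) * p := pow_pred hp hr
  have hpr0 : 0 < p ^ r := pow_pos (by omega) _
  rw [shift_eq hp hr hu]
  set q := p ^ (r - 1) with hqdef
  have hqp : 2 ≤ q * p := by
    calc 2 = 1 * 2 := by norm_num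
      _ ≤ q * p := Nat.mul_le_mul hq hp
  have hdm : q * (u / q) + u % q = u := Nat.div_add_mod u q
  set a := u % q with ha
  set b := u / q with hb
  have hbp : b < p := by
    rw [hb]
    apply Nat.div_lt_of_lt_mul
    calc u < p ^ r := by omega
      _ = q * p := hpr
  have hmod : (a * p + b) % p = b := by
    rw [Nat.add_comm, Nat.add_mul_mod_self_right, Nat.mod_eq_of_lt hbp]
  rw [hmod, hpr]
  have e1 : (q * p - 1) * b + b = q * p * b := by rw [← Nat.succ_mul]; congr 1; omega
  have e2 : p * u = p * (q * b) + p * a := by rw [← hdm]; ring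
  have e3 : p * (q * b) = q * p * b := by ring
  have e4 : a * p = p * a := by ring
  omega

lemma shift_iter {p r : ℕ} (hp : 2 ≤ p) (hr : 1 ≤ r) :
    ∀ k, k ≤ r → ∀ u, u ≤ p ^ r - 1 →
      (shiftFun p r)^[k] u = (u % p ^ (r - k)) * p ^ k + u / p ^ (r - k) := by
  intro k
  induction k with
  | zero =>
    intro _ u hu
    have h0 : 0 < p ^ r := pow_pos (by omega) _
    simp [Nat.mod_eq_of_lt (show u < p ^ r by omega), Nat.div_eq_of_lt (show u < p ^ r by omega)]
  | succ k ih =>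
    intro hk u hu
    have hkr : k ≤ r := by omega
    rw [Function.iterate_succ_apply', ih hkr u hu]
    set a := u % p ^ (r - k) with ha
    set b := u / p ^ (r - k) with hb
    have hq1 : 0 < p ^ (r - k) := pow_pos (by omega) _
    have hq2 : 0 < p ^ k := pow_pos (by omega) _
    have hq3 : 0 < p ^ (r - 1 - k) := pow_pos (by omega) _
    have haq : a < p ^ (r - k) := Nat.mod_lt _ hq1
    have hbq : b < p ^ k := by
      rw [hb]
      apply Nat.div_lt_of_lt_mul
      have h0 : 0 < p ^ r := pow_pos (by omega) _
      calc u < p ^ r := by omega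
        _ = p ^ (r - k) * p ^ k := by rw [← pow_add]; congr 1; omega
    have hpow0 : p ^ (r - k) * p ^ k = p ^ r := by rw [← pow_add]; congr 1; omega
    have hpow1 : p ^ (r - 1 - k) * p ^ k = p ^ (r - 1) := by rw [← pow_add]; congr 1; omega
    have hpow2 : p ^ (r - 1 - k) * p = p ^ (r - k) := by rw [← pow_succ]; congr 1; omega
    have hx : a * p ^ k + b ≤ p ^ r - 1 := by
      have e1 : (p ^ (r - k) - 1) * p ^ k + p ^ k = p ^ (r - k) * p ^ k := by
        rw [← Nat.succ_mul]; congr 1; omega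
      have e2 : a * p ^ k ≤ (p ^ (r - k) - 1) * p ^ k :=
        Nat.mul_le_mul_right _ (by omega)
      omega
    rw [shift_eq hp hr hx]
    have hdm : p ^ (r - 1 - k) * (a / p ^ (r - 1 - k)) + a % p ^ (r - 1 - k) = a :=
      Nat.div_add_mod a _
    have hsmall : (a % p ^ (r - 1 - k)) * p ^ k + b < p ^ (r - 1) := by
      have h1 : a % p ^ (r - 1 - k) ≤ p ^ (r - 1 - k) - 1 := by
        have := Nat.mod_lt a hq3; omega
      have e1 : (p ^ (r - 1 - k) - 1) * p ^ k + p ^ k = p ^ (r - 1 - k) * p ^ k := by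
        rw [← Nat.succ_mul]; congr 1; omega
      have e2 : (a % p ^ (r - 1 - k)) * p ^ k ≤ (p ^ (r - 1 - k) - 1) * p ^ k :=
        Nat.mul_le_mul_right _ h1
      omega
    have hxdecomp : a * p ^ k + b
        = ((a % p ^ (r - 1 - k)) * p ^ k + b) + p ^ (r - 1) * (a / p ^ (r - 1 - k)) := by
      have e2 : a * p ^ k = (p ^ (r - 1 - k) * (a / p ^ (r - 1 - k)) + a % p ^ (r - 1 - k)) * p ^ k := by
        rw [hdm]
      have e3 : (p ^ (r - 1 - k) * (a / p ^ (r - 1 - k)) + a % p ^ (r - 1 - k)) * p ^ k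
          = p ^ (r - 1 - k) * p ^ k * (a / p ^ (r - 1 - k)) + (a % p ^ (r - 1 - k)) * p ^ k := by
        ring
      rw [e2, e3, hpow1]
      ring
    have hmod : (a * p ^ k + b) % p ^ (r - 1) = (a % p ^ (r - 1 - k)) * p ^ k + b := by
      rw [hxdecomp, Nat.add_mul_mod_self_left, Nat.mod_eq_of_lt hsmall]
    have hdiv : (a * p ^ k + b) / p ^ (r - 1) = a / p ^ (r - 1 - k) := by
      rw [hxdecomp, Nat.add_mul_div_left _ _ (pow_pos (show 0 < p by omega) _),
        Nat.div_eq_of_lt hsmall]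
      omega
    rw [hmod, hdiv]
    have hexp : r - 1 - k = r - (k + 1) := by omega
    have e1 : a % p ^ (r - 1 - k) = u % p ^ (r - (k + 1)) := by
      rw [ha, Nat.mod_mod_of_dvd u (pow_dvd_pow p (by omega : r - 1 - k ≤ r - k)), hexp]
    have e2 : a / p ^ (r - 1 - k) = u / p ^ (r - (k + 1)) % p := by
      rw [ha, ← hpow2, Nat.mod_mul_right_div_self, hexp]
    have e3 : b = u / p ^ (r - (k + 1)) / p := by
      rw [hb, Nat.div_div_eq_div_mul, ← hexp, hpow2]
    rw [e1, e2, e3]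
    have hdm2 := Nat.div_add_mod (u / p ^ (r - (k + 1))) p
    calc (u % p ^ (r - (k + 1)) * p ^ k + u / p ^ (r - (k + 1)) / p) * p
          + u / p ^ (r - (k + 1)) % p
        = u % p ^ (r - (k + 1)) * p ^ (k + 1)
          + (p * (u / p ^ (r - (k + 1)) / p) + u / p ^ (r - (k + 1)) % p) := by ring
      _ = u % p ^ (r - (k + 1)) * p ^ (k + 1) + u / p ^ (r - (k + 1)) := by rw [hdm2]

lemma shift_iter_le {p r : ℕ} (hp : 2 ≤ p) (hr : 1 ≤ r) {u : ℕ} (hu : u ≤ p ^ r - 1) :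
    ∀ k, (shiftFun p r)^[k] u ≤ p ^ r - 1 := by
  intro k
  induction k with
  | zero => simpa using hu
  | succ k ih => rw [Function.iterate_succ_apply']; exact shift_le hp hr ih

lemma shift_iter_r {p r : ℕ} (hp : 2 ≤ p) (hr : 1 ≤ r) {u : ℕ} (hu : u ≤ p ^ r - 1) :
    (shiftFun p r)^[r] u = u := by
  rw [shift_iter hp hr r le_rfl u hu, Nat.sub_self, pow_zero, Nat.mod_one, Nat.div_one,
    zero_mul, zero_add]

lemma sp_eq_sum {p : ℕ} (hp : 2 ≤ p) :
    ∀ r u, u < p ^ r → sp p u = ∑ j ∈ Finset.range r, u / p ^ j % p := by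
  intro r
  induction r with
  | zero =>
    intro u hu
    simp only [pow_zero] at hu
    obtain rfl : u = 0 := by omega
    simp [sp]
  | succ r ih =>
    intro u hu
    by_cases h0 : u = 0
    · subst h0
      simp [sp]
    · have hd : Nat.digits p u = u % p :: Nat.digits p (u / p) :=
        Nat.digits_def' (by omega) (by omega)
      have hu' : u / p < p ^ r := by
        apply Nat.div_lt_of_lt_mul
        calc u < p ^ (r + 1) := hu
          _ = p * p ^ r := by rw [pow_succ']
      have hsp : sp p u = u % p + sp p (u / p) := by
        unfold sp
        rw [hd, List.sum_cons]
      rw [hsp, ih _ hu', Finset.sum_range_succ']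
      simp only [pow_zero, Nat.div_one]
      rw [Nat.add_comm]
      congr 1
      apply Finset.sum_congr rfl
      intro j _
      rw [Nat.div_div_eq_div_mul, ← pow_succ']

lemma sp_shift_sum {p r u : ℕ} (hp : 2 ≤ p) (hr : 1 ≤ r) (hu : u ≤ p ^ r - 1) :
    ∑ k ∈ Finset.range r, ((shiftFun p r)^[k] u % p) = sp p u := by
  have hpr : 0 < p ^ r := pow_pos (by omega) _
  have hul : u < p ^ r := by omega
  rw [sp_eq_sum hp r u hul]
  set f := fun k => (shiftFun p r)^[k] u % p with hf
  set g := fun j => u / p ^ j % p with hg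
  have hterm : ∀ k, 1 ≤ k → k ≤ r - 1 → f k = g (r - k) := by
    intro k hk1 hk2
    simp only [hf, hg]
    rw [shift_iter hp hr k (by omega) u hu]
    have hsplit : (u % p ^ (r - k)) * p ^ k = ((u % p ^ (r - k)) * p ^ (k - 1)) * p := by
      rw [mul_assoc, ← pow_succ]
      congr 2
      omega
    rw [hsplit, Nat.add_comm, Nat.add_mul_mod_self_right]
  have h00 : f 0 = g 0 := by simp [hf, hg]
  have hsum : ∀ (h : ℕ → ℕ), ∑ k ∈ Finset.range r, h k
      = h 0 + ∑ k ∈ Finset.range (r - 1), h (k + 1) := by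
    intro h
    conv_lhs => rw [show r = (r - 1) + 1 by omega]
    rw [Finset.sum_range_succ']
    exact Nat.add_comm _ _
  rw [hsum f, hsum g, h00]
  congr 1
  rw [← Finset.sum_range_reflect (fun j => g (j + 1)) (r - 1)]
  apply Finset.sum_congr rfl
  intro k hk
  simp only [Finset.mem_range] at hk
  rw [hterm (k + 1) (by omega) (by omega)]
  congr 1
  omega

lemma sp_add_mul {p a m : ℕ} (hp : 2 ≤ p) (ha : a < p) :
    sp p (a + p * m) = a + sp p m := by
  by_cases h0 : a + p * m = 0
  · have ha0 : a = 0 := by omega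
    have hm0 : m = 0 := by
      rcases Nat.mul_eq_zero.mp (show p * m = 0 by omega) with h | h
      · omega
      · exact h
    simp [ha0, hm0, sp]
  · have hd : Nat.digits p (a + p * m) = (a + p * m) % p :: Nat.digits p ((a + p * m) / p) :=
      Nat.digits_def' (by omega) (by omega)
    have hmod : (a + p * m) % p = a := by
      rw [Nat.add_mul_mod_self_left, Nat.mod_eq_of_lt ha]
    have hdiv : (a + p * m) / p = m := by
      rw [Nat.add_mul_div_left _ _ (by omega : 0 < p), Nat.div_eq_of_lt ha]
      omega
    unfold sp
    rw [hd, hmod, hdiv, List.sum_cons]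

lemma ofDigits_range {p : ℕ} (A : ℕ → ℕ) :
    ∀ l, Nat.ofDigits p ((List.range l).map A) = ∑ i ∈ Finset.range l, p ^ i * A i := by
  intro l
  induction l with
  | zero => simp
  | succ l ih =>
    rw [List.range_succ, List.map_append, Nat.ofDigits_append, ih, Finset.sum_range_succ]
    simp [Nat.ofDigits_singleton]

lemma list_range_map_sum {M : Type*} [AddCommMonoid M] (f : ℕ → M) :
    ∀ n, (((List.range n).map f).sum) = ∑ i ∈ Finset.range n, f i := by
  intro n
  induction n with
  | zero => simp
  | succ n ih =>
    rw [List.range_succ, List.map_append, List.sum_append, Finset.sum_range_succ, ih]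
    simp

/-! ### Lemmas about `memE`, `shiftE`, `phiMap` -/

variable {ι : Type} [Fintype ι]

lemma memE_sigma_eq {p : ℕ} {D : Finset (ι → ℕ)} {r : ℕ} {W : D → ℕ}
    (hE : memE p D r W) (k : ι) :
    sigmaSum D W k = (p ^ r - 1) * phiMap p D r W k :=
  (Nat.mul_div_cancel' (hE.2 k).1).symm

lemma phi_pos {p : ℕ} {D : Finset (ι → ℕ)} {r : ℕ} {W : D → ℕ}
    (hE : memE p D r W) (k : ι) : 0 < phiMap p D r W k := by
  have h1 := memE_sigma_eq hE k
  have h2 := (hE.2 k).2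
  by_contra h
  push_neg at h
  have h0 : phiMap p D r W k = 0 := by omega
  rw [h0, Nat.mul_zero] at h1
  omega

lemma shiftE_iter_apply {p : ℕ} {D : Finset (ι → ℕ)} {r : ℕ} (k : ℕ) (W : D → ℕ) (d : D) :
    (shiftE p D r)^[k] W d = (shiftFun p r)^[k] (W d) := by
  induction k generalizing W with
  | zero => rfl
  | succ k ih =>
    rw [Function.iterate_succ_apply, Function.iterate_succ_apply]
    exact ih _

lemma sigma_identity {p : ℕ} (hp : 2 ≤ p) {D : Finset (ι → ℕ)} {r : ℕ} (hr : 1 ≤ r)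
    {W : D → ℕ} (hb : ∀ d, W d ≤ p ^ r - 1) (k : ι) :
    p * sigmaSum D W k = sigmaSum D (shiftE p D r W) k
      + (p ^ r - 1) * ∑ d, (shiftE p D r W d % p) * (d : ι → ℕ) k := by
  unfold sigmaSum
  rw [Finset.mul_sum, Finset.mul_sum, ← Finset.sum_add_distrib]
  apply Finset.sum_congr rfl
  intro d _
  have hid := shift_identity hp hr (hb d)
  calc p * (W d * (d : ι → ℕ) k) = (p * W d) * (d : ι → ℕ) k := by ring
    _ = (shiftFun p r (W d) + (p ^ r - 1) * (shiftFun p r (W d) % p)) * (d : ι → ℕ) k := by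
        rw [hid]
    _ = shiftE p D r W d * (d : ι → ℕ) k
        + (p ^ r - 1) * (shiftE p D r W d % p * (d : ι → ℕ) k) := by
        show _ = shiftFun p r (W d) * _ + _ * (shiftFun p r (W d) % p * _)
        ring

lemma memE_shift {p : ℕ} (hp : 2 ≤ p) {D : Finset (ι → ℕ)} {r : ℕ} (hr : 1 ≤ r)
    {W : D → ℕ} (hE : memE p D r W) : memE p D r (shiftE p D r W) := by
  obtain ⟨hb, hs⟩ := hE
  refine ⟨fun d => shift_le hp hr (hb d), fun k => ?_⟩
  have hid := sigma_identity hp hr hb k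
  constructor
  · have h1 : (p ^ r - 1) ∣ p * sigmaSum D W k := Dvd.dvd.mul_left (hs k).1 p
    have h2 : (p ^ r - 1) ∣ (p ^ r - 1) * ∑ d, (shiftE p D r W d % p) * (d : ι → ℕ) k :=
      dvd_mul_right _ _
    have h3 : sigmaSum D (shiftE p D r W) k
        = p * sigmaSum D W k
          - (p ^ r - 1) * ∑ d, (shiftE p D r W d % p) * (d : ι → ℕ) k :=
      (Nat.eq_sub_of_add_eq hid.symm)
    rw [h3]
    exact Nat.dvd_sub h1 h2
  · by_contra hzero
    push_neg at hzero
    have h0 : sigmaSum D (shiftE p D r W) k = 0 := by omega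
    have hW0 : sigmaSum D W k = 0 := by
      unfold sigmaSum at h0 ⊢
      rw [Finset.sum_eq_zero_iff] at h0
      apply Finset.sum_eq_zero
      intro d hd
      rcases Nat.mul_eq_zero.mp (h0 d hd) with h | h
      · have hz : W d = 0 := shift_zero hp hr (hb d) h
        rw [hz, zero_mul]
      · rw [h, mul_zero]
    have := (hs k).2
    omega

lemma memE_shift_iter {p : ℕ} (hp : 2 ≤ p) {D : Finset (ι → ℕ)} {r : ℕ} (hr : 1 ≤ r)
    {W : D → ℕ} (hE : memE p D r W) : ∀ k, memE p D r ((shiftE p D r)^[k] W) := by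
  intro k
  induction k with
  | zero => exact hE
  | succ k ih => rw [Function.iterate_succ_apply']; exact memE_shift hp hr ih

lemma shiftE_iter_r {p : ℕ} (hp : 2 ≤ p) {D : Finset (ι → ℕ)} {r : ℕ} (hr : 1 ≤ r)
    {W : D → ℕ} (hb : ∀ d, W d ≤ p ^ r - 1) : (shiftE p D r)^[r] W = W := by
  funext d
  rw [shiftE_iter_apply, shift_iter_r hp hr (hb d)]

lemma phi_identity {p : ℕ} (hp : 2 ≤ p) {D : Finset (ι → ℕ)} {r : ℕ} (hr : 1 ≤ r)
    {W : D → ℕ} (hE : memE p D r W) (k : ι) :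
    p * phiMap p D r W k = phiMap p D r (shiftE p D r W) k
      + ∑ d, (psiMap p D (shiftE p D r W) d) * (d : ι → ℕ) k := by
  have h1lt : 1 < p ^ r := Nat.one_lt_pow (by omega) (by omega)
  have hM : 0 < p ^ r - 1 := by omega
  apply Nat.eq_of_mul_eq_mul_left hM
  have hE' := memE_shift hp hr hE
  have h1 := memE_sigma_eq hE k
  have h2 := memE_sigma_eq hE' k
  have hid := sigma_identity hp hr hE.1 k
  calc (p ^ r - 1) * (p * phiMap p D r W k) = p * ((p ^ r - 1) * phiMap p D r W k) := by ring
    _ = p * sigmaSum D W k := by rw [← h1]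
    _ = sigmaSum D (shiftE p D r W) k
        + (p ^ r - 1) * ∑ d, (shiftE p D r W d % p) * (d : ι → ℕ) k := hid
    _ = (p ^ r - 1) * (phiMap p D r (shiftE p D r W) k
        + ∑ d, (psiMap p D (shiftE p D r W) d) * (d : ι → ℕ) k) := by
        rw [h2]
        unfold psiMap
        ring

lemma spU_cycle {p : ℕ} (hp : 2 ≤ p) {D : Finset (ι → ℕ)} {r : ℕ} (hr : 1 ≤ r)
    {W : D → ℕ} (hb : ∀ d, W d ≤ p ^ r - 1) :
    spU p D W = ∑ k ∈ Finset.range r, ∑ d, ((shiftE p D r)^[k] W d % p) := by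
  unfold spU
  rw [Finset.sum_comm]
  apply Finset.sum_congr rfl
  intro d _
  rw [← sp_shift_sum hp hr (hb d)]
  apply Finset.sum_congr rfl
  intro k _
  rw [shiftE_iter_apply]

/-! ### Paths and cycles of digit tuples -/

def sumA (p : ℕ) (D : Finset (ι → ℕ)) (c : List ((D → ℕ) × (ι → ℕ))) (d : D) : ℕ :=
  Nat.ofDigits p (c.map (fun s => s.1 d))

def dstV {D : Finset (ι → ℕ)} (c : List ((D → ℕ) × (ι → ℕ))) (src : ι → ℕ) : ι → ℕ :=
  c.foldl (fun _ s => s.2) src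

def IsPath (p : ℕ) (D : Finset (ι → ℕ)) : List ((D → ℕ) × (ι → ℕ)) → (ι → ℕ) → Prop
  | [], _ => True
  | s :: t, src => (∀ d : D, s.1 d < p) ∧
      (∀ k, (∑ d, s.1 d * (d : ι → ℕ) k) + src k = p * s.2 k) ∧ IsPath p D t s.2

lemma isPath_nil {p : ℕ} {D : Finset (ι → ℕ)} {src : ι → ℕ} : IsPath p D [] src := trivial

lemma isPath_cons {p : ℕ} {D : Finset (ι → ℕ)} {s : (D → ℕ) × (ι → ℕ)}
    {t : List ((D → ℕ) × (ι → ℕ))} {src : ι → ℕ} :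
    IsPath p D (s :: t) src ↔ (∀ d : D, s.1 d < p) ∧
      (∀ k, (∑ d, s.1 d * (d : ι → ℕ) k) + src k = p * s.2 k) ∧ IsPath p D t s.2 := Iff.rfl

@[simp] lemma dstV_nil {D : Finset (ι → ℕ)} (src : ι → ℕ) : dstV (D := D) [] src = src := rfl

@[simp] lemma dstV_cons {D : Finset (ι → ℕ)} (s : (D → ℕ) × (ι → ℕ))
    (t : List ((D → ℕ) × (ι → ℕ))) (src : ι → ℕ) : dstV (s :: t) src = dstV t s.2 := rfl

lemma dstV_append {D : Finset (ι → ℕ)} (c₁ c₂ : List ((D → ℕ) × (ι → ℕ))) (src : ι → ℕ) :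
    dstV (c₁ ++ c₂) src = dstV c₂ (dstV c₁ src) := by
  simp [dstV, List.foldl_append]

@[simp] lemma sumA_nil (p : ℕ) (D : Finset (ι → ℕ)) (d : D) : sumA p D [] d = 0 := by
  simp [sumA]

lemma sumA_cons (p : ℕ) (D : Finset (ι → ℕ)) (s : (D → ℕ) × (ι → ℕ))
    (t : List ((D → ℕ) × (ι → ℕ))) (d : D) :
    sumA p D (s :: t) d = s.1 d + p * sumA p D t d := by
  simp [sumA, Nat.ofDigits_cons]

lemma isPath_digits {p : ℕ} {D : Finset (ι → ℕ)} :
    ∀ {c : List ((D → ℕ) × (ι → ℕ))} {src : ι → ℕ}, IsPath p D c src →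
      ∀ x ∈ c, ∀ d : D, x.1 d < p := by
  intro c
  induction c with
  | nil => intro src _ x hx; simp at hx
  | cons s t ih =>
    intro src h x hx d
    rcases List.mem_cons.mp hx with rfl | hx
    · exact h.1 d
    · exact ih h.2.2 x hx d

lemma sumA_lt' {p : ℕ} (hp : 2 ≤ p) {D : Finset (ι → ℕ)} {c : List ((D → ℕ) × (ι → ℕ))}
    (hdig : ∀ x ∈ c, ∀ d : D, x.1 d < p) (d : D) : sumA p D c d < p ^ c.length := by
  have h := Nat.ofDigits_lt_base_pow_length (b := p) (l := c.map (fun s => s.1 d)) (by omega) ?_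
  · simpa [sumA, List.length_map] using h
  · intro x hx
    obtain ⟨s, hs, rfl⟩ := List.mem_map.mp hx
    exact hdig s hs d

lemma sumA_lt {p : ℕ} (hp : 2 ≤ p) {D : Finset (ι → ℕ)} {c : List ((D → ℕ) × (ι → ℕ))}
    {src : ι → ℕ} (h : IsPath p D c src) (d : D) : sumA p D c d < p ^ c.length :=
  sumA_lt' hp (isPath_digits h) d

lemma path_sigma {p : ℕ} {D : Finset (ι → ℕ)} :
    ∀ {c : List ((D → ℕ) × (ι → ℕ))} {src : ι → ℕ}, IsPath p D c src → ∀ k,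
      (∑ d, sumA p D c d * (d : ι → ℕ) k) + src k = p ^ c.length * dstV c src k := by
  intro c
  induction c with
  | nil => intro src _ k; simp
  | cons s t ih =>
    intro src h k
    have h1 := h.2.1 k
    have h2 := ih h.2.2 k
    have hterm : ∀ d : D, sumA p D (s :: t) d * (d : ι → ℕ) k
        = s.1 d * (d : ι → ℕ) k + p * (sumA p D t d * (d : ι → ℕ) k) := by
      intro d
      rw [sumA_cons]
      ring
    rw [Finset.sum_congr rfl (fun d _ => hterm d), Finset.sum_add_distrib, ← Finset.mul_sum,
      dstV_cons, List.length_cons]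
    calc (∑ d, s.1 d * (d : ι → ℕ) k) + p * (∑ d, sumA p D t d * (d : ι → ℕ) k) + src k
        = ((∑ d, s.1 d * (d : ι → ℕ) k) + src k)
          + p * ∑ d, sumA p D t d * (d : ι → ℕ) k := by ring
      _ = p * s.2 k + p * ∑ d, sumA p D t d * (d : ι → ℕ) k := by rw [h1]
      _ = p * ((∑ d, sumA p D t d * (d : ι → ℕ) k) + s.2 k) := by ring
      _ = p * (p ^ t.length * dstV t s.2 k) := by rw [h2]
      _ = p ^ (t.length + 1) * dstV t s.2 k := by ring

lemma path_spU {p : ℕ} (hp : 2 ≤ p) {D : Finset (ι → ℕ)} :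
    ∀ {c : List ((D → ℕ) × (ι → ℕ))} {src : ι → ℕ}, IsPath p D c src →
      spU p D (sumA p D c) = (c.map (fun s => ∑ d, s.1 d)).sum := by
  intro c
  induction c with
  | nil => intro src _; simp [spU, sp]
  | cons s t ih =>
    intro src h
    have hrec := ih h.2.2
    unfold spU at *
    simp only [List.map_cons, List.sum_cons]
    rw [← hrec, ← Finset.sum_add_distrib]
    apply Finset.sum_congr rfl
    intro d _
    rw [sumA_cons, sp_add_mul hp (h.1 d)]

lemma path_pos {p : ℕ} (hp : 2 ≤ p) {D : Finset (ι → ℕ)} :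
    ∀ {c : List ((D → ℕ) × (ι → ℕ))} {src : ι → ℕ}, IsPath p D c src →
      (∀ k, 0 < src k) → ∀ k, 0 < dstV c src k := by
  intro c
  induction c with
  | nil => intro src _ h k; exact h k
  | cons s t ih =>
    intro src h hsrc k
    rw [dstV_cons]
    apply ih h.2.2
    intro k'
    have h1 := h.2.1 k'
    have h2 := hsrc k'
    by_contra hc
    push_neg at hc
    have h0 : s.2 k' = 0 := by omega
    rw [h0, Nat.mul_zero] at h1
    omega

lemma path_append {p : ℕ} {D : Finset (ι → ℕ)} :
    ∀ {c₁ c₂ : List ((D → ℕ) × (ι → ℕ))} {src : ι → ℕ},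
      IsPath p D (c₁ ++ c₂) src ↔ IsPath p D c₁ src ∧ IsPath p D c₂ (dstV c₁ src) := by
  intro c₁
  induction c₁ with
  | nil => intro c₂ src; simp [isPath_nil, IsPath]
  | cons s t ih =>
    intro c₂ src
    simp only [List.cons_append, isPath_cons, dstV_cons]
    constructor
    · rintro ⟨hd, hrel, h⟩
      exact ⟨⟨hd, hrel, (ih.mp h).1⟩, (ih.mp h).2⟩
    · rintro ⟨⟨hd, hrel, ht⟩, h2⟩
      exact ⟨hd, hrel, ih.mpr ⟨ht, h2⟩⟩

lemma cycle_main {p : ℕ} (hp : 2 ≤ p) {D : Finset (ι → ℕ)} {c : List ((D → ℕ) × (ι → ℕ))}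
    {src : ι → ℕ} (hpath : IsPath p D c src) (hdst : dstV c src = src)
    (hlen : 1 ≤ c.length) (hpos : ∀ k, 0 < src k) :
    memE p D c.length (sumA p D c) ∧ (∀ k, phiMap p D c.length (sumA p D c) k = src k) ∧
      spU p D (sumA p D c) = (c.map (fun s => ∑ d, s.1 d)).sum := by
  have hplen : 1 < p ^ c.length := Nat.one_lt_pow (by omega) (by omega)
  have hsig : ∀ k, sigmaSum D (sumA p D c) k = (p ^ c.length - 1) * src k := by
    intro k
    have h1 := path_sigma hpath k
    rw [hdst] at h1
    have h2 : p ^ c.length * src k = (p ^ c.length - 1) * src k + src k := by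
      rw [← Nat.succ_mul]
      congr 1
      omega
    unfold sigmaSum
    omega
  refine ⟨⟨fun d => ?_, fun k => ⟨⟨src k, hsig k⟩, ?_⟩⟩, fun k => ?_, path_spU hp hpath⟩
  · have := sumA_lt hp hpath d
    omega
  · rw [hsig k]
    exact Nat.mul_pos (by omega) (hpos k)
  · unfold phiMap
    rw [hsig k, Nat.mul_div_cancel_left _ (by omega : 0 < p ^ c.length - 1)]

lemma shift_sumA {p : ℕ} (hp : 2 ≤ p) {D : Finset (ι → ℕ)}
    {c : List ((D → ℕ) × (ι → ℕ))} {s : (D → ℕ) × (ι → ℕ)}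
    (hdig : ∀ x ∈ c ++ [s], ∀ d : D, x.1 d < p) :
    shiftE p D (c.length + 1) (sumA p D (c ++ [s])) = sumA p D (s :: c) := by
  funext d
  have hsplit : sumA p D (c ++ [s]) d = sumA p D c d + p ^ c.length * s.1 d := by
    unfold sumA
    rw [List.map_append, Nat.ofDigits_append]
    simp [Nat.ofDigits_singleton]
  have hclt : sumA p D c d < p ^ c.length :=
    sumA_lt' hp (fun x hx => hdig x (by simp [hx])) d
  have hslt : s.1 d < p := hdig s (by simp) d
  have hub : sumA p D (c ++ [s]) d ≤ p ^ (c.length + 1) - 1 := by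
    have h := sumA_lt' hp hdig d
    rw [List.length_append] at h
    simp only [List.length_singleton] at h
    omega
  show shiftFun p (c.length + 1) (sumA p D (c ++ [s]) d) = _
  rw [shift_eq hp (by omega) hub, show c.length + 1 - 1 = c.length from rfl]
  have hmod : sumA p D (c ++ [s]) d % p ^ c.length = sumA p D c d := by
    rw [hsplit, Nat.add_mul_mod_self_left, Nat.mod_eq_of_lt hclt]
  have hdiv : sumA p D (c ++ [s]) d / p ^ c.length = s.1 d := by
    rw [hsplit, Nat.add_mul_div_left _ _ (pow_pos (by omega : 0 < p) _),
      Nat.div_eq_of_lt hclt]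
    omega
  rw [hmod, hdiv, sumA_cons]
  ring

lemma path_of_fun {p : ℕ} {D : Finset (ι → ℕ)} {F : ℕ → ((D → ℕ) × (ι → ℕ))}
    {g : ℕ → ι → ℕ} :
    ∀ (n m : ℕ),
      (∀ j, m ≤ j → j < m + n → ∀ d : D, (F j).1 d < p) →
      (∀ j, m ≤ j → j < m + n → ∀ k,
        (∑ d, (F j).1 d * (d : ι → ℕ) k) + g j k = p * g (j + 1) k) →
      (∀ j, m ≤ j → j < m + n → (F j).2 = g (j + 1)) →
      IsPath p D ((List.range n).map (fun i => F (i + m))) (g m) ∧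
        dstV ((List.range n).map (fun i => F (i + m))) (g m) = g (m + n) := by
  intro n
  induction n with
  | zero =>
    intro m _ _ _
    exact ⟨isPath_nil, by simp⟩
  | succ n ih =>
    intro m hdig hrel hsnd
    have hlist : (List.range (n + 1)).map (fun i => F (i + m))
        = F m :: (List.range n).map (fun i => F (i + (m + 1))) := by
      rw [List.range_succ_eq_map, List.map_cons, List.map_map]
      congr 1
      · congr 1
        omega
      · apply List.map_congr_left
        intro a _
        simp only [Function.comp_apply]
        congr 1
        omega
    rw [hlist]
    have ihm := ih (m + 1) (fun j h1 h2 => hdig j (by omega) (by omega))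
      (fun j h1 h2 => hrel j (by omega) (by omega)) (fun j h1 h2 => hsnd j (by omega) (by omega))
    have hsndm : (F m).2 = g (m + 1) := hsnd m (by omega) (by omega)
    constructor
    · rw [isPath_cons]
      refine ⟨hdig m (by omega) (by omega), ?_, ?_⟩
      · intro k
        rw [hsndm]
        exact hrel m (by omega) (by omega) k
      · rw [hsndm]
        exact ihm.1
    · rw [dstV_cons, hsndm, ihm.2, show m + 1 + n = m + (n + 1) by omega]

lemma path_concat {p : ℕ} {D : Finset (ι → ℕ)} {B : ℕ → List ((D → ℕ) × (ι → ℕ))}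
    {g : ℕ → ι → ℕ} :
    ∀ n, (∀ j, j < n → IsPath p D (B j) (g j) ∧ dstV (B j) (g j) = g (j + 1)) →
      IsPath p D ((List.range n).flatMap B) (g 0) ∧
        dstV ((List.range n).flatMap B) (g 0) = g n := by
  intro n
  induction n with
  | zero => exact fun _ => ⟨isPath_nil, rfl⟩
  | succ n ih =>
    intro h
    have hn := ih (fun j hj => h j (by omega))
    have hsplit : (List.range (n + 1)).flatMap B = (List.range n).flatMap B ++ B n := by
      rw [List.range_succ, List.flatMap_append]
      simp
    rw [hsplit]
    constructor
    · rw [path_append]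
      exact ⟨hn.1, by rw [hn.2]; exact (h n (by omega)).1⟩
    · rw [dstV_append, hn.2]
      exact (h n (by omega)).2

lemma flat_length {α : Type*} (B : ℕ → List α) :
    ∀ n, ((List.range n).flatMap B).length = ∑ j ∈ Finset.range n, (B j).length := by
  intro n
  induction n with
  | zero => simp
  | succ n ih =>
    rw [List.range_succ, List.flatMap_append, List.length_append, ih, Finset.sum_range_succ]
    simp

lemma flat_map_sum {α : Type*} (B : ℕ → List α) (f : α → ℕ) :
    ∀ n, (((List.range n).flatMap B).map f).sum = ∑ j ∈ Finset.range n, ((B j).map f).sum := by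
  intro n
  induction n with
  | zero => simp
  | succ n ih =>
    rw [List.range_succ, List.flatMap_append, List.map_append, List.sum_append, ih,
      Finset.sum_range_succ]
    simp

/-! ### Peeling and block lemmas -/

lemma sum_peel {r : ℕ} (hr : 1 ≤ r) (f : ℕ → ℕ) :
    ∑ k ∈ Finset.range r, f k = f 0 + ∑ k ∈ Finset.range (r - 1), f (k + 1) := by
  conv_lhs => rw [show r = (r - 1) + 1 by omega]
  rw [Finset.sum_range_succ']
  exact Nat.add_comm _ _

def blkG (p : ℕ) (D : Finset (ι → ℕ)) (r : ℕ) (W : D → ℕ) (j : ℕ) : ι → ℕ :=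
  phiMap p D r ((shiftE p D r)^[r - 1 - j] W)

def blkF (p : ℕ) (D : Finset (ι → ℕ)) (r : ℕ) (W : D → ℕ) (j : ℕ) : (D → ℕ) × (ι → ℕ) :=
  (psiMap p D ((shiftE p D r)^[r - 1 - j] W), blkG p D r W (j + 1))

def blk (p : ℕ) (D : Finset (ι → ℕ)) (r : ℕ) (W : D → ℕ) : List ((D → ℕ) × (ι → ℕ)) :=
  (List.range (r - 1)).map (fun n => blkF p D r W (n + 0))

lemma blk_length (p : ℕ) (D : Finset (ι → ℕ)) (r : ℕ) (W : D → ℕ) :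
    (blk p D r W).length = r - 1 := by simp [blk]

lemma blkG_zero (p : ℕ) (D : Finset (ι → ℕ)) (r : ℕ) (W : D → ℕ) :
    blkG p D r W 0 = phiMap p D r ((shiftE p D r)^[r - 1] W) := by
  unfold blkG
  rw [Nat.sub_zero]

lemma blkG_last (p : ℕ) (D : Finset (ι → ℕ)) (r : ℕ) (W : D → ℕ) :
    blkG p D r W (r - 1) = phiMap p D r W := by
  unfold blkG
  rw [Nat.sub_self, Function.iterate_zero_apply]

lemma blk_path {p : ℕ} (hp : 2 ≤ p) {D : Finset (ι → ℕ)} {r : ℕ} (hr : 1 ≤ r)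
    {W : D → ℕ} (hE : memE p D r W) :
    IsPath p D (blk p D r W) (blkG p D r W 0) ∧
      dstV (blk p D r W) (blkG p D r W 0) = blkG p D r W (r - 1) := by
  have hiterE := memE_shift_iter hp hr hE
  have h := path_of_fun (p := p) (D := D) (F := blkF p D r W) (g := blkG p D r W) (r - 1) 0
    (fun j _ _ d => by
      show psiMap p D _ d < p
      exact Nat.mod_lt _ (by omega))
    (fun j _ hj k => by
      have hiter : (shiftE p D r)^[r - 1 - j] W
          = shiftE p D r ((shiftE p D r)^[r - 1 - (j + 1)] W) := by
        rw [show r - 1 - j = (r - 1 - (j + 1)) + 1 by omega, Function.iterate_succ_apply']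
      have hid := phi_identity hp hr (hiterE (r - 1 - (j + 1))) k
      rw [← hiter] at hid
      show (∑ d, psiMap p D ((shiftE p D r)^[r - 1 - j] W) d * (d : ι → ℕ) k)
          + blkG p D r W j k = p * blkG p D r W (j + 1) k
      unfold blkG
      omega)
    (fun j _ _ => rfl)
  rw [show 0 + (r - 1) = r - 1 by omega] at h
  exact h

lemma blk_weight {p : ℕ} (hp : 2 ≤ p) {D : Finset (ι → ℕ)} {r : ℕ} (hr : 1 ≤ r)
    {W : D → ℕ} (hE : memE p D r W) :
    ((blk p D r W).map (fun s => ∑ d, s.1 d)).sum + (∑ d, psiMap p D W d) = spU p D W := by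
  rw [spU_cycle hp hr hE.1, sum_peel hr _]
  have hw0 : (∑ d, ((shiftE p D r)^[0] W d % p)) = ∑ d, psiMap p D W d := by
    simp only [Function.iterate_zero_apply]
    rfl
  rw [hw0, Nat.add_comm (∑ d, psiMap p D W d)]
  congr 1
  unfold blk
  rw [List.map_map, list_range_map_sum,
    ← Finset.sum_range_reflect (fun n => ∑ d, ((shiftE p D r)^[n + 1] W d % p)) (r - 1)]
  apply Finset.sum_congr rfl
  intro n hn
  simp only [Finset.mem_range] at hn
  simp only [Function.comp_apply]
  show (∑ d, psiMap p D ((shiftE p D r)^[r - 1 - (n + 0)] W) d) = _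
  rw [show r - 1 - (n + 0) = (r - 1 - 1 - n) + 1 by omega]
  rfl

lemma val_neg_one' {r : ℕ} (hr : 1 ≤ r) : (-1 : ZMod r).val = r - 1 := by
  obtain ⟨s, rfl⟩ : ∃ s, r = s + 1 := ⟨r - 1, by omega⟩
  simpa using ZMod.val_neg_one s

lemma density_le_spU {p : ℕ} (hp : 2 ≤ p) {D : Finset (ι → ℕ)}
    {R : ℕ} (hR : 1 ≤ R) {W : D → ℕ} (hW : memE p D R W) :
    ((p : ℝ) - 1) * (R : ℝ) * density p D ≤ (spU p D W : ℝ) := by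
  have h1 : sDp p D R ≤ spU p D W := Nat.sInf_le ⟨W, hW, rfl⟩
  have hbd : BddBelow {x : ℝ | ∃ r : ℕ, 1 ≤ r ∧ x = (sDp p D r : ℝ) / (r : ℝ)} := by
    refine ⟨0, fun x hx => ?_⟩
    obtain ⟨r, hr, rfl⟩ := hx
    positivity
  have h2 : sInf {x : ℝ | ∃ r : ℕ, 1 ≤ r ∧ x = (sDp p D r : ℝ) / (r : ℝ)}
      ≤ (sDp p D R : ℝ) / (R : ℝ) := csInf_le hbd ⟨R, hR, rfl⟩
  have hp1 : (0 : ℝ) < (p : ℝ) - 1 := by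
    have h3 : (2 : ℝ) ≤ (p : ℝ) := by exact_mod_cast hp
    linarith
  have hR0 : (0 : ℝ) < (R : ℝ) := by
    have h4 : (1 : ℝ) ≤ (R : ℝ) := by exact_mod_cast hR
    linarith
  unfold density
  calc ((p : ℝ) - 1) * (R : ℝ)
        * (1 / ((p : ℝ) - 1) * sInf {x : ℝ | ∃ r : ℕ, 1 ≤ r ∧ x = (sDp p D r : ℝ) / (r : ℝ)})
      = (R : ℝ) * sInf {x : ℝ | ∃ r : ℕ, 1 ≤ r ∧ x = (sDp p D r : ℝ) / (r : ℝ)} := by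
        field_simp
    _ ≤ (R : ℝ) * ((sDp p D R : ℝ) / (R : ℝ)) := by
        exact mul_le_mul_of_nonneg_left h2 (le_of_lt hR0)
    _ = (sDp p D R : ℝ) := by field_simp
    _ ≤ (spU p D W : ℝ) := by exact_mod_cast h1

def cycG (e : ℤ → ι → ℕ) (l : ℕ) (n : ℕ) : ι → ℕ := e (((n + l - 1) % l : ℕ) : ℤ)

def cycF (D : Finset (ι → ℕ)) (V : ℕ → D → ℕ) (e : ℤ → ι → ℕ) (l : ℕ) (n : ℕ) :
    (D → ℕ) × (ι → ℕ) := (V (n % l), cycG e l (n + 1))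

end DigitsGlueAux


open DigitsGlueAux

/-- Given `e_{−1}, e_0, …, e_{l−1} ∈ Σ_p(D)` with `e_{−1} = e_{l−1}` and all
`V(e_i, e_{i−1})` nonempty, and chosen `V_i ∈ V(e_i, e_{i−1})`, the tuple
`U = (Σ_i p^i v_{i,d})_d` is a minimal element of `E_{D,p}(l)` with support
`φ_U(i) = e_{l−1−i}`. -/
theorem digits_glue_minimal (p : ℕ) (hp : p.Prime) {ι : Type} [Fintype ι] [Nonempty ι]
    (D : Finset (ι → ℕ)) (hD : D.Nonempty)
    (hcoord : ∀ k : ι, ∃ d ∈ D, 0 < d k)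
    (l : ℕ) (hl : 1 ≤ l) (e : ℤ → (ι → ℕ))
    (he : ∀ j : ℤ, -1 ≤ j → j ≤ (l : ℤ) - 1 → e j ∈ minSupport p D)
    (hee : e (-1) = e ((l : ℤ) - 1))
    (V : ℕ → (D → ℕ))
    (hV : ∀ i : ℕ, i < l → V i ∈ Vset p D (e (i : ℤ)) (e ((i : ℤ) - 1)))
    (U : D → ℕ) (hU : U = fun d => ∑ i ∈ Finset.range l, p ^ i * V i d) :
    minimalSol p D l U ∧
    ∀ i : ℕ, i < l → suppMap p D l U ((i : ℕ) : ZMod l) = e ((l : ℤ) - 1 - (i : ℤ)) := by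
  classical
  have hp2 : 2 ≤ p := hp.two_le
  haveI : NeZero l := ⟨by omega⟩
  -- extract witnesses from the nonempty V-sets
  have hV' : ∀ i : ℕ, ∃ (r : ℕ) (W : D → ℕ), i < l →
      (1 ≤ r ∧ memE p D r W ∧
        ((spU p D W : ℝ) = ((p : ℝ) - 1) * (r : ℝ) * density p D) ∧
        suppMap p D r W (-1) = e (i : ℤ) ∧ suppMap p D r W 0 = e ((i : ℤ) - 1) ∧
        psiMap p D W = V i) := by
    intro i
    by_cases h : i < l
    · obtain ⟨r, hr1, W, hMI, h1, h2, h3⟩ := hV i h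
      exact ⟨r, W, fun _ => ⟨hr1, hMI.1.1, hMI.1.2, h1, h2, h3⟩⟩
    · exact ⟨1, fun _ => 0, fun hc => absurd hc h⟩
  choose rr UU hprop using hV'
  have hr : ∀ i, i < l → 1 ≤ rr i := fun i h => (hprop i h).1
  have hUE : ∀ i, i < l → memE p D (rr i) (UU i) := fun i h => (hprop i h).2.1
  have hUmin : ∀ i, i < l → (spU p D (UU i) : ℝ)
      = ((p : ℝ) - 1) * (rr i : ℝ) * density p D := fun i h => (hprop i h).2.2.1
  have hsm1 : ∀ i, i < l → suppMap p D (rr i) (UU i) (-1) = e (i : ℤ) :=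
    fun i h => (hprop i h).2.2.2.1
  have hsm0 : ∀ i, i < l → suppMap p D (rr i) (UU i) 0 = e ((i : ℤ) - 1) :=
    fun i h => (hprop i h).2.2.2.2.1
  have hpsi : ∀ i, i < l → psiMap p D (UU i) = V i := fun i h => (hprop i h).2.2.2.2.2
  have hiterE : ∀ i, i < l → ∀ k, memE p D (rr i) ((shiftE p D (rr i))^[k] (UU i)) :=
    fun i h => memE_shift_iter hp2 (hr i h) (hUE i h)
  -- the vertices e i as phi-values
  have hei : ∀ i, i < l →
      phiMap p D (rr i) ((shiftE p D (rr i))^[rr i - 1] (UU i)) = e (i : ℤ) := by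
    intro i h
    have h1 := hsm1 i h
    rw [← h1]
    unfold suppMap
    rw [val_neg_one' (hr i h)]
  have hei0 : ∀ i, i < l → phiMap p D (rr i) (UU i) = e ((i : ℤ) - 1) := by
    intro i h
    have h1 := hsm0 i h
    rw [← h1]
    unfold suppMap
    haveI : NeZero (rr i) := ⟨by have := hr i h; omega⟩
    rw [ZMod.val_zero, Function.iterate_zero_apply]
  have hposE : ∀ m, m < l → ∀ k, 0 < e (m : ℤ) k := by
    intro m hm k
    rw [← hei m hm]
    exact phi_pos (hiterE m hm _) k
  -- the basic step relations
  have hR : ∀ i, i < l → ∀ k,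
      (∑ d, V i d * (d : ι → ℕ) k) + e ((i : ℤ) - 1) k = p * e (i : ℤ) k := by
    intro i h k
    have hiter : (shiftE p D (rr i))^[rr i] (UU i) = UU i :=
      shiftE_iter_r hp2 (hr i h) (hUE i h).1
    have hiter2 : shiftE p D (rr i) ((shiftE p D (rr i))^[rr i - 1] (UU i)) = UU i := by
      calc shiftE p D (rr i) ((shiftE p D (rr i))^[rr i - 1] (UU i))
          = (shiftE p D (rr i))^[(rr i - 1) + 1] (UU i) :=
            (Function.iterate_succ_apply' _ _ _).symm
        _ = UU i := by
            rw [show (rr i - 1) + 1 = rr i by have := hr i h; omega]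
            exact hiter
    have hid := phi_identity hp2 (hr i h) (hiterE i h (rr i - 1)) k
    rw [hiter2, hei i h, hei0 i h, hpsi i h] at hid
    omega
  -- digits of the chosen V's are < p
  have hVd : ∀ n, ∀ d : D, V (n % l) d < p := by
    intro n d
    have hn : n % l < l := Nat.mod_lt _ (by omega)
    have h1 := hpsi (n % l) hn
    rw [← h1]
    exact Nat.mod_lt _ (by omega)
  have hdigF : ∀ n, ∀ d : D, (cycF D V e l n).1 d < p := fun n d => hVd n d
  -- periodicity and relations of the cyclic data
  have hGmod : ∀ n, cycG e l (n + 1) = e ((n % l : ℕ) : ℤ) := by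
    intro n
    unfold cycG
    rw [show n + 1 + l - 1 = n + l by omega, Nat.add_mod_right]
  have hGper : ∀ n, cycG e l (n + l) = cycG e l n := by
    intro n
    unfold cycG
    rw [show n + l + l - 1 = (n + l - 1) + l by omega, Nat.add_mod_right]
  have hFper : ∀ n, cycF D V e l (n + l) = cycF D V e l n := by
    intro n
    unfold cycF
    rw [Prod.mk.injEq]
    constructor
    · rw [Nat.add_mod_right]
    · rw [show n + l + 1 = (n + 1) + l by omega]
      exact hGper (n + 1)
  have hrelF : ∀ n k, (∑ d, (cycF D V e l n).1 d * (d : ι → ℕ) k)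
      + cycG e l n k = p * cycG e l (n + 1) k := by
    intro n k
    have hnl : n % l < l := Nat.mod_lt _ (by omega)
    have hF1 : (cycF D V e l n).1 = V (n % l) := rfl
    rw [hF1, hGmod n]
    have hmodsh : (n + l - 1) % l = (n % l + l - 1) % l := by
      have hdm := Nat.mod_add_div n l
      rw [show n + l - 1 = (n % l + l - 1) + l * (n / l) by omega, Nat.add_mul_mod_self_left]
    by_cases h0 : n % l = 0
    · have hGn : cycG e l n = e ((l : ℤ) - 1) := by
        unfold cycG
        rw [hmodsh, h0, show 0 + l - 1 = l - 1 by omega, Nat.mod_eq_of_lt (by omega),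
          show ((l - 1 : ℕ) : ℤ) = (l : ℤ) - 1 by omega]
      rw [hGn, h0]
      have hthis := hR 0 (by omega) k
      rw [show ((0 : ℕ) : ℤ) - 1 = (-1 : ℤ) by norm_num, hee] at hthis
      exact hthis
    · have hGn : cycG e l n = e (((n % l : ℕ) : ℤ) - 1) := by
        unfold cycG
        rw [hmodsh, show n % l + l - 1 = (n % l - 1) + l by omega, Nat.add_mod_right,
          Nat.mod_eq_of_lt (by omega),
          show ((n % l - 1 : ℕ) : ℤ) = ((n % l : ℕ) : ℤ) - 1 by omega]
      rw [hGn]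
      exact hR (n % l) hnl k
  -- the rotated cycles
  have hcyc : ∀ m, IsPath p D ((List.range l).map (fun n => cycF D V e l (n + m)))
      (cycG e l m) ∧
      dstV ((List.range l).map (fun n => cycF D V e l (n + m))) (cycG e l m)
        = cycG e l m := by
    intro m
    have h := path_of_fun (p := p) (D := D) (F := cycF D V e l) (g := cycG e l) l m
      (fun j _ _ d => hdigF j d) (fun j _ _ k => hrelF j k) (fun j _ _ => rfl)
    refine ⟨h.1, ?_⟩
    rw [h.2]
    exact hGper m
  have hGpos : ∀ m k, 0 < cycG e l m k := by
    intro m k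
    unfold cycG
    exact hposE _ (Nat.mod_lt _ (by omega)) k
  have hcycmain : ∀ m,
      memE p D l (sumA p D ((List.range l).map (fun n => cycF D V e l (n + m))))
      ∧ (∀ k, phiMap p D l (sumA p D ((List.range l).map (fun n => cycF D V e l (n + m)))) k
          = cycG e l m k)
      ∧ spU p D (sumA p D ((List.range l).map (fun n => cycF D V e l (n + m))))
          = (((List.range l).map (fun n => cycF D V e l (n + m))).map
              (fun s => ∑ d, s.1 d)).sum := by
    intro m
    have hlen : ((List.range l).map (fun n => cycF D V e l (n + m))).length = l := by simp
    have h := cycle_main hp2 (hcyc m).1 (hcyc m).2 (by rw [hlen]; omega) (hGpos m)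
    rw [hlen] at h
    exact h
  have hU0 : U = sumA p D ((List.range l).map (fun n => cycF D V e l (n + l))) := by
    funext d
    rw [hU]
    show (∑ i ∈ Finset.range l, p ^ i * V i d) = _
    unfold sumA
    rw [List.map_map]
    have hcomp : ((fun s : (D → ℕ) × (ι → ℕ) => s.1 d) ∘ fun n => cycF D V e l (n + l))
        = fun n => V ((n + l) % l) d := rfl
    rw [hcomp, ofDigits_range (fun n => V ((n + l) % l) d) l]
    apply Finset.sum_congr rfl
    intro i hi
    simp only [Finset.mem_range] at hi
    rw [Nat.add_mod_right, Nat.mod_eq_of_lt hi]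
  have hmemEU : memE p D l U := by
    rw [hU0]
    exact (hcycmain l).1
  have hSW : spU p D U = ∑ i ∈ Finset.range l, ∑ d, V i d := by
    rw [hU0, (hcycmain l).2.2, List.map_map, list_range_map_sum]
    apply Finset.sum_congr rfl
    intro i hi
    simp only [Finset.mem_range] at hi
    simp only [Function.comp_apply]
    show (∑ d, (cycF D V e l (i + l)).1 d) = ∑ d, V i d
    apply Finset.sum_congr rfl
    intro d _
    show V ((i + l) % l) d = V i d
    rw [Nat.add_mod_right, Nat.mod_eq_of_lt hi]
  -- the support of U
  have hshift : ∀ j, j < l → (shiftE p D l)^[j] U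
      = sumA p D ((List.range l).map (fun n => cycF D V e l (n + (2 * l - j)))) := by
    intro j
    induction j with
    | zero =>
      intro _
      rw [Function.iterate_zero_apply, hU0]
      have hle : (List.range l).map (fun n => cycF D V e l (n + l))
          = (List.range l).map (fun n => cycF D V e l (n + (2 * l - 0))) := by
        apply List.map_congr_left
        intro n _
        rw [show n + (2 * l - 0) = (n + l) + l by omega]
        exact (hFper (n + l)).symm
      rw [hle]
    | succ j ihj =>
      intro hjl
      have hj : j < l := by omega
      rw [Function.iterate_succ_apply', ihj hj]
      have hls : List.range l = List.range (l - 1) ++ [l - 1] := by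
        conv_lhs => rw [show l = Nat.succ (l - 1) by omega]
        exact List.range_succ
      have hsplit : (List.range l).map (fun n => cycF D V e l (n + (2 * l - j)))
          = ((List.range (l - 1)).map (fun n => cycF D V e l (n + (2 * l - j))))
            ++ [cycF D V e l ((l - 1) + (2 * l - j))] := by
        rw [hls, List.map_append]
        rfl
      rw [hsplit]
      have hdigall : ∀ x ∈ ((List.range (l - 1)).map (fun n => cycF D V e l (n + (2 * l - j))))
          ++ [cycF D V e l ((l - 1) + (2 * l - j))], ∀ d : D, x.1 d < p := by
        intro x hx d
        rcases List.mem_append.mp hx with hx | hx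
        · obtain ⟨n, _, rfl⟩ := List.mem_map.mp hx
          exact hdigF _ d
        · rw [List.mem_singleton.mp hx]
          exact hdigF _ d
      have hsh := shift_sumA hp2 hdigall
      rw [List.length_map, List.length_range, show l - 1 + 1 = l by omega] at hsh
      rw [hsh]
      have hrange : List.range l = 0 :: (List.range (l - 1)).map Nat.succ := by
        conv_lhs => rw [show l = (l - 1) + 1 by omega]
        exact List.range_succ_eq_map
      have hlists : (cycF D V e l ((l - 1) + (2 * l - j)))
            :: (List.range (l - 1)).map (fun n => cycF D V e l (n + (2 * l - j)))
          = (List.range l).map (fun n => cycF D V e l (n + (2 * l - (j + 1)))) := by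
        rw [hrange, List.map_cons, List.map_map]
        congr 1
        · rw [show (l - 1) + (2 * l - j) = (0 + (2 * l - (j + 1))) + l by omega]
          exact hFper _
        · apply List.map_congr_left
          intro n _
          simp only [Function.comp_apply]
          congr 1
          omega
      rw [hlists]
  have hsupp : ∀ i : ℕ, i < l →
      suppMap p D l U ((i : ℕ) : ZMod l) = e ((l : ℤ) - 1 - (i : ℤ)) := by
    intro i hil
    funext k
    show phiMap p D l ((shiftE p D l)^[((i : ZMod l)).val] U) k = _
    rw [ZMod.val_natCast_of_lt hil, hshift i hil, (hcycmain (2 * l - i)).2.1 k]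
    unfold cycG
    rw [show 2 * l - i + l - 1 = (l - 1 - i) + l * 2 by omega, Nat.add_mul_mod_self_left,
      Nat.mod_eq_of_lt (by omega), show ((l - 1 - i : ℕ) : ℤ) = (l : ℤ) - 1 - (i : ℤ) by omega]
  -- blocks: the complementary paths
  have hblk : ∀ i, i < l → IsPath p D (blk p D (rr i) (UU i)) (e (i : ℤ)) ∧
      dstV (blk p D (rr i) (UU i)) (e (i : ℤ)) = e ((i : ℤ) - 1) := by
    intro i hil
    have h := blk_path hp2 (hr i hil) (hUE i hil)
    have hz : blkG p D (rr i) (UU i) 0 = e (i : ℤ) := by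
      rw [blkG_zero]
      exact hei i hil
    have hlast : blkG p D (rr i) (UU i) (rr i - 1) = e ((i : ℤ) - 1) := by
      rw [blkG_last]
      exact hei0 i hil
    rw [hz, hlast] at h
    exact h
  have hconcat := path_concat (p := p) (D := D)
    (B := fun j => blk p D (rr (l - 1 - j)) (UU (l - 1 - j)))
    (g := fun j : ℕ => e ((l : ℤ) - 1 - (j : ℤ))) l
    (by
      intro j hjl
      have hi : l - 1 - j < l := by omega
      have h := hblk (l - 1 - j) hi
      have hc1 : ((l - 1 - j : ℕ) : ℤ) = (l : ℤ) - 1 - (j : ℤ) := by omega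
      have hc2 : ((l - 1 - j : ℕ) : ℤ) - 1 = (l : ℤ) - 1 - ((j + 1 : ℕ) : ℤ) := by omega
      rw [hc2, hc1] at h
      exact h)
  simp only [Nat.cast_zero, sub_zero] at hconcat
  have hCpath : IsPath p D
      ((List.range l).flatMap (fun j => blk p D (rr (l - 1 - j)) (UU (l - 1 - j))))
      (e ((l : ℤ) - 1)) := hconcat.1
  have hCdst : dstV
      ((List.range l).flatMap (fun j => blk p D (rr (l - 1 - j)) (UU (l - 1 - j))))
      (e ((l : ℤ) - 1)) = e ((l : ℤ) - 1) := by
    have h2 := hconcat.2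
    rw [show (l : ℤ) - 1 - ((l : ℕ) : ℤ) = -1 by omega, hee] at h2
    exact h2
  have hsrcpos : ∀ k, 0 < e ((l : ℤ) - 1) k := by
    intro k
    have h := hposE (l - 1) (by omega) k
    rwa [show ((l - 1 : ℕ) : ℤ) = (l : ℤ) - 1 by omega] at h
  have hLL : ((List.range l).flatMap
        (fun j => blk p D (rr (l - 1 - j)) (UU (l - 1 - j)))).length
      = ∑ i ∈ Finset.range l, (rr i - 1) := by
    rw [flat_length]
    calc ∑ j ∈ Finset.range l, (blk p D (rr (l - 1 - j)) (UU (l - 1 - j))).length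
        = ∑ j ∈ Finset.range l, (rr (l - 1 - j) - 1) := by
          apply Finset.sum_congr rfl
          intro j _
          exact blk_length p D _ _
      _ = ∑ i ∈ Finset.range l, (rr i - 1) :=
          Finset.sum_range_reflect (fun i => rr i - 1) l
  have hCW : (((List.range l).flatMap
        (fun j => blk p D (rr (l - 1 - j)) (UU (l - 1 - j)))).map
          (fun s => ∑ d, s.1 d)).sum
      = ∑ i ∈ Finset.range l, ((blk p D (rr i) (UU i)).map (fun s => ∑ d, s.1 d)).sum := by
    rw [flat_map_sum]
    exact Finset.sum_range_reflect
      (fun i => ((blk p D (rr i) (UU i)).map (fun s => ∑ d, s.1 d)).sum) l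
  have hblkw : ∀ i, i < l → ((blk p D (rr i) (UU i)).map (fun s => ∑ d, s.1 d)).sum
      + (∑ d, V i d) = spU p D (UU i) := by
    intro i hil
    have h := blk_weight hp2 (hr i hil) (hUE i hil)
    rw [hpsi i hil] at h
    exact h
  -- total weight bookkeeping
  have htot : (∑ i ∈ Finset.range l, ((blk p D (rr i) (UU i)).map (fun s => ∑ d, s.1 d)).sum)
      + spU p D U = ∑ i ∈ Finset.range l, spU p D (UU i) := by
    rw [hSW, ← Finset.sum_add_distrib]
    apply Finset.sum_congr rfl
    intro i hi
    exact hblkw i (Finset.mem_range.mp hi)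
  have hmins : ∑ i ∈ Finset.range l, ((spU p D (UU i) : ℕ) : ℝ)
      = ∑ i ∈ Finset.range l, ((p : ℝ) - 1) * (rr i : ℝ) * density p D := by
    apply Finset.sum_congr rfl
    intro i hi
    exact hUmin i (Finset.mem_range.mp hi)
  have hXA : ∑ i ∈ Finset.range l, ((p : ℝ) - 1) * (rr i : ℝ) * density p D
      = (((p : ℝ) - 1) * density p D) * ∑ i ∈ Finset.range l, (rr i : ℝ) := by
    rw [Finset.mul_sum]
    apply Finset.sum_congr rfl
    intro i _
    ring
  have hTR : ((∑ i ∈ Finset.range l, spU p D (UU i) : ℕ) : ℝ)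
      = (((p : ℝ) - 1) * density p D) * ∑ i ∈ Finset.range l, (rr i : ℝ) := by
    rw [Nat.cast_sum, hmins]
    exact hXA
  have hBS : ((∑ i ∈ Finset.range l,
        ((blk p D (rr i) (UU i)).map (fun s => ∑ d, s.1 d)).sum : ℕ) : ℝ)
      + (spU p D U : ℝ)
      = (((p : ℝ) - 1) * density p D) * ∑ i ∈ Finset.range l, (rr i : ℝ) := by
    rw [← hTR]
    exact_mod_cast congrArg (fun n : ℕ => (n : ℝ)) htot
  -- the upper bound
  have hup : (spU p D U : ℝ) ≤ ((p : ℝ) - 1) * (l : ℝ) * density p D := by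
    have hexp0 : (((p : ℝ) - 1) * density p D) * (l : ℝ)
        = ((p : ℝ) - 1) * (l : ℝ) * density p D := by ring
    by_cases hL0 : ((List.range l).flatMap
        (fun j => blk p D (rr (l - 1 - j)) (UU (l - 1 - j)))).length = 0
    · have hr1 : ∀ i, i < l → rr i = 1 := by
        intro i hil
        have h1 : ∑ i ∈ Finset.range l, (rr i - 1) = 0 := by rw [← hLL]; exact hL0
        have h2 := Finset.sum_eq_zero_iff.mp h1
        have h3 := h2 i (Finset.mem_range.mpr hil)
        have h4 := hr i hil
        omega
      have hbw0 : ∀ i, i < l →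
          ((blk p D (rr i) (UU i)).map (fun s => ∑ d, s.1 d)).sum = 0 := by
        intro i hil
        have h5 : (blk p D (rr i) (UU i)).length = 0 := by
          rw [blk_length, hr1 i hil]
        rw [List.length_eq_zero_iff] at h5
        rw [h5]
        rfl
      have hsum0 : (∑ i ∈ Finset.range l,
          ((blk p D (rr i) (UU i)).map (fun s => ∑ d, s.1 d)).sum) = 0 :=
        Finset.sum_eq_zero (fun i hi => hbw0 i (Finset.mem_range.mp hi))
      have hA : ∑ i ∈ Finset.range l, (rr i : ℝ) = (l : ℝ) := by
        have h6 : ∀ i ∈ Finset.range l, (rr i : ℝ) = 1 := by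
          intro i hi
          rw [hr1 i (Finset.mem_range.mp hi)]
          norm_num
        rw [Finset.sum_congr rfl h6]
        simp
      rw [hsum0, hA] at hBS
      norm_num at hBS
      linarith
    · have hL1 : 1 ≤ ((List.range l).flatMap
          (fun j => blk p D (rr (l - 1 - j)) (UU (l - 1 - j)))).length := by omega
      obtain ⟨hCE, _hphi, hCsp⟩ := cycle_main hp2 hCpath hCdst hL1 hsrcpos
      have hlowC := density_le_spU hp2 hL1 hCE
      have hBCn : spU p D (sumA p D ((List.range l).flatMap
            (fun j => blk p D (rr (l - 1 - j)) (UU (l - 1 - j)))))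
          = ∑ i ∈ Finset.range l,
            ((blk p D (rr i) (UU i)).map (fun s => ∑ d, s.1 d)).sum := by
        rw [hCsp]
        exact hCW
      rw [hBCn] at hlowC
      have hlenR : ((((List.range l).flatMap
            (fun j => blk p D (rr (l - 1 - j)) (UU (l - 1 - j)))).length : ℕ) : ℝ)
          = (∑ i ∈ Finset.range l, (rr i : ℝ)) - (l : ℝ) := by
        rw [hLL, Nat.cast_sum]
        rw [Finset.sum_congr rfl
          (fun i hi => Nat.cast_sub (hr i (Finset.mem_range.mp hi)))]
        rw [Finset.sum_sub_distrib]
        simp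
      rw [hlenR] at hlowC
      have hexp : ((p : ℝ) - 1) * ((∑ i ∈ Finset.range l, (rr i : ℝ)) - (l : ℝ))
            * density p D
          = (((p : ℝ) - 1) * density p D) * (∑ i ∈ Finset.range l, (rr i : ℝ))
            - ((p : ℝ) - 1) * (l : ℝ) * density p D := by ring
      linarith
  have hlow := density_le_spU hp2 hl hmemEU
  exact ⟨⟨hmemEU, le_antisymm hup hlow⟩, hsupp⟩
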